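/- For every k ≥ 1 and l ≥ 0, the constant term of φ^{(l)}_{−k} is: φ^{(l)}_{−k}(0) = (k−1)λ_1 + kλ_2 if l ≥ k; φ^{(l)}_{−k}(0) = (k−1)λ_1 if l = k−1; and φ^{(l)}_{−k}(0) = 0 if l ≤ k−2. -/
import Mathlib


noncomputable section

/-- An affine function `φ(x) = c + Σ_k φ_k x_k` on `ℤ^∞[λ]`: a constant term
together with a finitely supported family of coefficients indexed by the
nonzero integers (the coefficient at index `0` is always `0` below). -/
abbrev Aff : Type := ℚ × (ℤ →₀ ℚ)

/-- Evaluation of an affine function at a rational point. -/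
def evalF (φ : Aff) (x : ℤ → ℚ) : ℚ := φ.1 + ∑ t ∈ φ.2.support, φ.2 t * x t

/-- Evaluation of an affine function at an integer point. -/
def evalZ (φ : Aff) (x : ℤ →₀ ℤ) : ℚ := φ.1 + ∑ t ∈ φ.2.support, φ.2 t * (x t : ℚ)

variable {I : Type*}

/-- `σ_k(x) = x_k + Σ_{j>k, j≠0} a_{i_k i_j} x_j` for `k ≥ 1`, with the extra
constant `-ℓ_{i_k}` when `k ≤ -1`. -/
def sigmaG (a : I → I → ℤ) (ℓ : I → ℤ) (ι : ℤ → I) (k : ℤ) (x : ℤ →₀ ℤ) : ℤ :=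
  (if k ≤ -1 then -ℓ (ι k) else 0) + x k +
    ∑ j ∈ x.support.filter (fun j => k < j ∧ j ≠ 0), a (ι k) (ι j) * x j

/-- The affine function `β̄_k = σ_k − σ_{k^{(+)}}`, given explicitly:
`β̄_k(x) = x_k + Σ_{k<j<k^{(+)}, j≠0} a_{i_k i_j} x_j + x_{k^{(+)}}`, plus the
constant `-ℓ_{i_k}` exactly when `k ≤ -1 < 1 ≤ k^{(+)}`. -/
def betaBarG (a : I → I → ℤ) (ℓ : I → ℤ) (ι : ℤ → I) (kp : ℤ → ℤ) (k : ℤ) : Aff :=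
  ⟨if k ≤ -1 ∧ 1 ≤ kp k then -(ℓ (ι k) : ℚ) else 0,
   Finsupp.onFinset (insert k (insert (kp k) (Finset.Ioo k (kp k))))
     (fun j => (if j = k then 1 else 0) + (if j = kp k then 1 else 0)
       + (if k < j ∧ j < kp k ∧ j ≠ 0 then (a (ι k) (ι j) : ℚ) else 0))
     (by
       intro j hj
       simp only [Finset.mem_insert, Finset.mem_Ioo]
       by_contra hc
       push_neg at hc
       obtain ⟨h1, h2, h3⟩ := hc
       apply hj
       simp only [if_neg h1, if_neg h2,
         if_neg (show ¬(k < j ∧ j < kp k ∧ j ≠ 0) by omega)]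
       ring)⟩

/-- The operator `S̄_k` on affine functions: `S̄_k φ = φ − φ_k β̄_k` if `φ_k > 0`
and `S̄_k φ = φ − φ_k β̄_{k^{(−)}}` if `φ_k ≤ 0`. -/
def SbarG (a : I → I → ℤ) (ℓ : I → ℤ) (ι : ℤ → I) (kp km : ℤ → ℤ) (k : ℤ) (φ : Aff) :
    Aff :=
  if 0 < φ.2 k then
    ⟨φ.1 - φ.2 k * (betaBarG a ℓ ι kp k).1, φ.2 - φ.2 k • (betaBarG a ℓ ι kp k).2⟩
  else
    ⟨φ.1 - φ.2 k * (betaBarG a ℓ ι kp (km k)).1,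
     φ.2 - φ.2 k • (betaBarG a ℓ ι kp (km k)).2⟩

end

noncomputable section

/-- The sequence `ι = (…,2,1,2,1,t_λ,2,1,2,1,…)` of type `A_1^{(1)}`:
`i_k = 1` for `k ≥ 1` odd, `i_k = 2` for `k ≥ 1` even, `i_{−m} = 2` for
`m ≥ 1` odd, `i_{−m} = 1` for `m ≥ 1` even. -/
def iseqB (k : ℤ) : ℤ :=
  if 0 < k then (if k % 2 = 1 then 1 else 2) else (if k % 2 = 1 then 2 else 1)

/-- The Cartan matrix of type `A_1^{(1)}`: `a_{11} = a_{22} = 2`,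
`a_{12} = a_{21} = −2`. -/
def aB (p q : ℤ) : ℤ := if p = q then 2 else -2

/-- The weight coefficients: `ℓ 1 = λ_1`, `ℓ 2 = λ_2`. -/
def lamB (lam1 lam2 : ℤ) (p : ℤ) : ℤ := if p = 1 then lam1 else lam2

/-- `k^{(+)}` for the type `A_1^{(1)}` sequence. -/
def kpB (k : ℤ) : ℤ := if -2 ≤ k ∧ k ≤ -1 then k + 3 else k + 2

/-- `k^{(−)}` for the type `A_1^{(1)}` sequence. -/
def kmB (k : ℤ) : ℤ := if 1 ≤ k ∧ k ≤ 2 then k - 3 else k - 2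

/-- The operator `S̄` at position `k` for the type `A_1^{(1)}` sequence. -/
def SbarB (lam1 lam2 : ℤ) (k : ℤ) (φ : Aff) : Aff :=
  SbarG aB (lamB lam1 lam2) iseqB kpB kmB k φ

/-- `C_{−k} = max(0, −(k−1)λ_1 − kλ_2)`, type `A_1^{(1)}`. -/
def CB (lam1 lam2 k : ℤ) : ℤ := max 0 (-(k - 1) * lam1 - k * lam2)

/-- The generator `x_{−k} + C_{−k}` of `Ξ'_ι[λ]`, as an affine function. -/
def genB (lam1 lam2 : ℤ) (k : ℤ) : Aff :=
  ⟨(CB lam1 lam2 k : ℚ), Finsupp.single (-k) 1⟩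

/-- `Ξ'_ι[λ] = { S̄_{−j_l} ⋯ S̄_{−j_1}(x_{−k} + C_{−k}) :
l ≥ 0, k ≥ 1, j_1,…,j_l ≥ 1 }` for type `A_1^{(1)}`. -/
def XiPrimeB (lam1 lam2 : ℤ) : Set Aff :=
  { φ | ∃ js : List ℤ, (∀ m ∈ js, 1 ≤ m) ∧ ∃ k : ℤ, 1 ≤ k ∧
      φ = js.foldl (fun ψ m => SbarB lam1 lam2 (-m) ψ) (genB lam1 lam2 k) }

/-- `φ^{(l)}_{−k}`: `S̄` applied to `x_{−k}` at the `l` consecutive nonzero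
positions `−k, −k+1, …` (skipping `0`). -/
def phiLB (lam1 lam2 k : ℤ) : ℕ → Aff
  | 0 => ⟨0, Finsupp.single (-k) 1⟩
  | l + 1 =>
      SbarB lam1 lam2 (if (-k + (l : ℤ)) < 0 then -k + (l : ℤ) else -k + (l : ℤ) + 1)
        (phiLB lam1 lam2 k l)

/-- `θ(t) = 1` for `t ≥ 0` and `θ(t) = 0` for `t < 0`. -/
def theta (t : ℤ) : ℤ := if 0 ≤ t then 1 else 0

/-- The coordinate `x_t`, with the convention that the coordinate indexed by
`0` is `0`. -/
def Xc0 (x : ℤ → ℚ) (t : ℤ) : ℚ := if t = 0 then 0 else x t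

end


noncomputable section

def posZ (p : ℤ) : ℤ := if p < 0 then p else p + 1

lemma posZ_ne (p : ℤ) : posZ p ≠ 0 := by unfold posZ; split_ifs <;> omega

lemma posZ_lt1 (p : ℤ) : posZ p < posZ (p + 1) := by unfold posZ; split_ifs <;> omega

lemma posZ_lt2 (p : ℤ) : posZ (p + 1) < posZ (p + 2) := by unfold posZ; split_ifs <;> omega

lemma posZ_mid (p j : ℤ) (h1 : posZ p < j) (h2 : j < posZ (p + 2)) (h3 : j ≠ 0) :
    j = posZ (p + 1) := by unfold posZ at *; split_ifs at * <;> omega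

lemma kpB_posZ (p : ℤ) : kpB (posZ p) = posZ (p + 2) := by
  unfold kpB posZ; split_ifs <;> omega

lemma aB_consec (p : ℤ) : aB (iseqB (posZ p)) (iseqB (posZ (p + 1))) = -2 := by
  unfold aB iseqB posZ; split_ifs <;> omega

lemma betaBar_snd (lam1 lam2 p : ℤ) :
    (betaBarG aB (lamB lam1 lam2) iseqB kpB (posZ p)).2 =
      Finsupp.single (posZ p) 1 + Finsupp.single (posZ (p + 1)) (-2)
        + Finsupp.single (posZ (p + 2)) 1 := by
  have hkp := kpB_posZ p
  have hlt1 := posZ_lt1 p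
  have hlt2 := posZ_lt2 p
  have hB0 : posZ (p + 1) ≠ 0 := posZ_ne _
  ext j
  rw [betaBarG]
  simp only [Finsupp.onFinset_apply, Finsupp.coe_add, Pi.add_apply,
    Finsupp.single_apply, hkp]
  by_cases hmid : posZ p < j ∧ j < posZ (p + 2) ∧ j ≠ 0
  · have hj := posZ_mid p j hmid.1 hmid.2.1 hmid.2.2
    subst hj
    rw [if_pos hmid, aB_consec]
    set A := posZ p with hA
    set B := posZ (p + 1) with hB
    set C := posZ (p + 2) with hC
    clear_value A B C
    split_ifs <;> first | (exfalso; omega) | (push_cast; ring)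
  · rw [if_neg hmid]
    set A := posZ p with hA
    set B := posZ (p + 1) with hB
    set C := posZ (p + 2) with hC
    clear_value A B C
    split_ifs <;> first | (exfalso; omega) | ring

lemma betaBar_fst (lam1 lam2 p : ℤ) :
    (betaBarG aB (lamB lam1 lam2) iseqB kpB (posZ p)).1 =
      if p = -1 then -(lam2 : ℚ) else if p = -2 then -(lam1 : ℚ) else 0 := by
  by_cases hp1 : p = -1
  · subst hp1
    rw [if_pos rfl]
    norm_num [betaBarG, kpB, posZ, iseqB, lamB]
  · by_cases hp2 : p = -2
    · subst hp2
      rw [if_neg hp1, if_pos rfl]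
      norm_num [betaBarG, kpB, posZ, iseqB, lamB]
    · rw [if_neg hp1, if_neg hp2, betaBarG]
      exact if_neg (by unfold posZ kpB; split_ifs <;> omega)

lemma step_lemma (lam1 lam2 p : ℤ) (c : ℚ) (n : ℕ) :
    SbarB lam1 lam2 (posZ p)
      ⟨c, Finsupp.single (posZ p) ((n : ℚ) + 1)
            + Finsupp.single (posZ (p + 1)) (-(n : ℚ))⟩ =
    ⟨c - ((n : ℚ) + 1) * (if p = -1 then -(lam2 : ℚ) else if p = -2 then -(lam1 : ℚ) else 0),
     Finsupp.single (posZ (p + 1)) ((n : ℚ) + 2)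
       + Finsupp.single (posZ (p + 2)) (-((n : ℚ) + 1))⟩ := by
  have hlt1 := posZ_lt1 p
  have hlt2 := posZ_lt2 p
  have hval : (Finsupp.single (posZ p) ((n : ℚ) + 1)
      + Finsupp.single (posZ (p + 1)) (-(n : ℚ))) (posZ p) = (n : ℚ) + 1 := by
    rw [Finsupp.add_apply, Finsupp.single_apply, Finsupp.single_apply,
      if_pos rfl, if_neg (posZ_lt1 p).ne', add_zero]
  rw [SbarB, SbarG]
  rw [if_pos (by rw [hval]; positivity)]
  rw [hval, betaBar_fst, betaBar_snd]
  refine Prod.ext rfl ?_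
  simp only
  ext j
  simp only [Finsupp.coe_sub, Finsupp.coe_add, Finsupp.coe_smul, Pi.sub_apply,
    Pi.add_apply, Pi.smul_apply, Finsupp.single_apply, smul_eq_mul]
  set A := posZ p with hA
  set B := posZ (p + 1) with hB
  set C := posZ (p + 2) with hC
  clear_value A B C
  split_ifs <;> first | (exfalso; omega) | ring

lemma phiLB_eq (lam1 lam2 k : ℤ) (hk : 1 ≤ k) (l : ℕ) :
    phiLB lam1 lam2 k l =
      ⟨(if k ≤ (l : ℤ) then (((k - 1) * lam1 + k * lam2 : ℤ) : ℚ)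
          else if (l : ℤ) = k - 1 then (((k - 1) * lam1 : ℤ) : ℚ) else 0),
       Finsupp.single (posZ (-k + l)) ((l : ℚ) + 1)
         + Finsupp.single (posZ (-k + l + 1)) (-(l : ℚ))⟩ := by
  induction l with
  | zero =>
      rw [phiLB]
      refine Prod.ext ?_ ?_
      · show (0 : ℚ) = _
        rw [if_neg (show ¬ k ≤ ((0:ℕ) : ℤ) by omega)]
        by_cases h : ((0:ℕ) : ℤ) = k - 1
        · rw [if_pos h]
          have hk1 : k = 1 := by omega
          subst hk1
          norm_num
        · rw [if_neg h]
      · show Finsupp.single (-k) 1 = _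
        simp only [Nat.cast_zero, neg_zero, Finsupp.single_zero, add_zero,
          Int.add_zero, zero_add]
        have h0 : posZ (-k) = -k := by unfold posZ; split_ifs <;> omega
        rw [h0]
  | succ l ih =>
      have hpos : (if (-k + (l : ℤ)) < 0 then -k + (l : ℤ) else -k + (l : ℤ) + 1)
          = posZ (-k + l) := rfl
      rw [phiLB, ih, hpos, step_lemma]
      refine Prod.ext ?_ ?_
      · simp only
        by_cases h1 : k ≤ (l : ℤ)
        · rw [if_pos h1, if_neg (by omega : ¬ -k + (l:ℤ) = -1),
            if_neg (by omega : ¬ -k + (l:ℤ) = -2),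
            if_pos (by push_cast; omega : k ≤ ((l+1 : ℕ) : ℤ))]
          ring
        · by_cases h2 : (l : ℤ) = k - 1
          · rw [if_neg h1, if_pos h2, if_pos (by omega : -k + (l:ℤ) = -1),
              if_pos (by push_cast; omega : k ≤ ((l+1 : ℕ) : ℤ))]
            have hl : (l : ℚ) = (k : ℚ) - 1 := by exact_mod_cast congrArg (Int.cast : ℤ → ℚ) h2
            push_cast
            rw [hl]; ring
          · by_cases h3 : (l : ℤ) = k - 2
            · rw [if_neg h1, if_neg h2, if_neg (by omega : ¬ -k + (l:ℤ) = -1),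
                if_pos (by omega : -k + (l:ℤ) = -2),
                if_neg (by push_cast; omega : ¬ k ≤ ((l+1 : ℕ) : ℤ)),
                if_pos (by push_cast; omega : ((l+1 : ℕ) : ℤ) = k - 1)]
              have hl : (l : ℚ) = (k : ℚ) - 2 := by exact_mod_cast congrArg (Int.cast : ℤ → ℚ) h3
              push_cast
              rw [hl]; ring
            · rw [if_neg h1, if_neg h2, if_neg (by omega : ¬ -k + (l:ℤ) = -1),
                if_neg (by omega : ¬ -k + (l:ℤ) = -2),
                if_neg (by push_cast; omega : ¬ k ≤ ((l+1 : ℕ) : ℤ)),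
                if_neg (by push_cast; omega : ¬ ((l+1 : ℕ) : ℤ) = k - 1)]
              ring
      · simp only
        have e1 : (-k + ((l:ℤ)) + 1) = -k + ((l+1 : ℕ) : ℤ) := by push_cast; ring
        have e2 : (-k + ((l:ℤ)) + 2) = -k + ((l+1 : ℕ) : ℤ) + 1 := by push_cast; ring
        rw [e1, e2]
        push_cast
        ring_nf

end

/-- Type `A_1^{(1)}` (Hoshino–Nakashima, proof of Theorem 6.1): the constant
term of `φ^{(l)}_{−k}` is `(k−1)λ_1 + kλ_2` if `l ≥ k`, `(k−1)λ_1` if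
`l = k−1`, and `0` if `l ≤ k−2`. -/
theorem phiL_constant_term_A_1_1
    (lam1 lam2 : ℤ) (h1 : 0 < lam1) (h2 : lam2 ≤ 0) (hlev : 0 < lam1 + lam2) :
    ∀ k : ℤ, 1 ≤ k → ∀ l : ℕ,
      (phiLB lam1 lam2 k l).1 =
        if k ≤ (l : ℤ) then (((k - 1) * lam1 + k * lam2 : ℤ) : ℚ)
        else if (l : ℤ) = k - 1 then (((k - 1) * lam1 : ℤ) : ℚ)
        else 0 := by
  intro k hk l
  rw [phiLB_eq lam1 lam2 k hk l]
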